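/- For every subgroup A of Perm(π), the product Nat.card fix(π) * Nat.card A divides Nat.card P. (In the paper's terms: for any labeled tree T whose automorphism group Aut(T) is a subgroup of Perm(π), the ratio |Perm(B)| / Sym(T) with Sym(T) = |Aut(T)| · |fix(π)| is a positive integer — paper eqs. (BTratio) and (BTratio2).) -/

import Mathlib

lemma lift_perm {β : Type*} [Fintype β] (s : Setoid β) {n : ℕ} (c : β → Fin n)
    (τ : Equiv.Perm (Fin n))
    (h : ∀ (i : Fin n) (x : β),
      Nat.card {y : β | c y = i ∧ s.r y x} = Nat.card {y : β | c y = τ i ∧ s.r y x}) :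
    ∃ σ : Equiv.Perm β, (∀ x, s.r (σ x) x) ∧ ∀ x, c (σ x) = τ (c x) := by
  classical
  set g : β → Quotient s × Fin n := fun y => (Quotient.mk s y, c y) with hg
  set e : Quotient s × Fin n ≃ Quotient s × Fin n := (Equiv.refl _).prodCongr τ with he
  have key : ∀ (q : Quotient s) (i : Fin n) (x : β), q = Quotient.mk s x →
      ({y // g y = (q, i)} ≃ {y : β | c y = i ∧ s.r y x}) := by
    rintro q i x rfl
    apply Equiv.subtypeEquivRight
    intro y
    simp only [hg, Prod.mk.injEq, Set.mem_setOf_eq, Quotient.eq]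
    exact and_comm.trans (Iff.rfl.and Iff.rfl)
  have hcard : ∀ p : Quotient s × Fin n,
      Fintype.card {y // g y = p} = Fintype.card {y // g y = e p} := by
    rintro ⟨q, i⟩
    obtain ⟨x, rfl⟩ := Quotient.exists_rep q
    have h1 := key _ i x rfl
    have h2 := key _ (τ i) x rfl
    have he2 : e (Quotient.mk s x, i) = (Quotient.mk s x, τ i) := rfl
    rw [he2, Fintype.card_congr h1, Fintype.card_congr h2,
      ← Nat.card_eq_fintype_card, ← Nat.card_eq_fintype_card]
    exact h i x
  set F : ∀ p, {y // g y = p} ≃ {y // g y = e p} :=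
    fun p => Fintype.equivOfCardEq (hcard p) with hF
  set σ : Equiv.Perm β :=
    (Equiv.sigmaFiberEquiv g).symm.trans
      ((Equiv.sigmaCongr e F).trans (Equiv.sigmaFiberEquiv g)) with hσ
  have hkey : ∀ x : β, g (σ x) = e (g x) := by
    intro x
    have : σ x = ((F (g x)) ⟨x, rfl⟩).val := rfl
    rw [this]
    exact ((F (g x)) ⟨x, rfl⟩).property
  refine ⟨σ, fun x => ?_, fun x => ?_⟩
  · have := congrArg Prod.fst (hkey x)
    simp only [hg, he, Equiv.prodCongr_apply, Equiv.coe_refl, Prod.map_fst, id] at this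
    exact Quotient.eq.mp this
  · have := congrArg Prod.snd (hkey x)
    simpa [hg, he] using this

/-- Paper eqs. (BTratio), (BTratio2): for any subgroup `A` of `Perm(π)` (such as the
automorphism group `Aut(T)` of a labeled tree), the product `|fix(π)| · |A|` divides
`|Perm(B)|`; i.e. the ratio `|Perm(B)| / Sym(T)` with `Sym(T) = |Aut(T)| · |fix(π)|`
is a positive integer. -/
theorem permB_div_symT_integer
    (β : Type*) [Fintype β] (s : Setoid β) (n : ℕ) (c : β → Fin n)
    (hc : Function.Surjective c)
    (P : Subgroup (Equiv.Perm β))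
    (hP : ∀ σ : Equiv.Perm β, σ ∈ P ↔ ∀ x, s.r (σ x) x)
    (fixπ : Subgroup (Equiv.Perm β))
    (hfix : ∀ σ : Equiv.Perm β, σ ∈ fixπ ↔
      ((∀ x, s.r (σ x) x) ∧ ∀ x, c (σ x) = c x))
    (Permπ : Subgroup (Equiv.Perm (Fin n)))
    (hPerm : ∀ τ : Equiv.Perm (Fin n), τ ∈ Permπ ↔
      ∀ (i : Fin n) (x : β),
        Nat.card {y : β | c y = i ∧ s.r y x} =
          Nat.card {y : β | c y = τ i ∧ s.r y x})
    (A : Subgroup (Equiv.Perm (Fin n))) (hA : A ≤ Permπ) :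
    Nat.card fixπ * Nat.card A ∣ Nat.card P := by
  classical
  have huniq : ∀ τ τ' : Equiv.Perm (Fin n), (∀ x, τ (c x) = τ' (c x)) → τ = τ' := by
    intro τ τ' h
    apply Equiv.ext
    intro i
    obtain ⟨x, rfl⟩ := hc i
    exact h x
  set H : Subgroup (Equiv.Perm β) :=
    { carrier := {σ | (∀ x, s.r (σ x) x) ∧ ∃ τ ∈ A, ∀ x, c (σ x) = τ (c x)}
      one_mem' := ⟨fun x => s.iseqv.refl x, 1, A.one_mem, fun x => rfl⟩
      mul_mem' := by
        rintro σ₁ σ₂ ⟨hr₁, τ₁, hτ₁, hcτ₁⟩ ⟨hr₂, τ₂, hτ₂, hcτ₂⟩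
        refine ⟨fun x => s.iseqv.trans (hr₁ (σ₂ x)) (hr₂ x), τ₁ * τ₂, A.mul_mem hτ₁ hτ₂,
          fun x => ?_⟩
        show c (σ₁ (σ₂ x)) = τ₁ (τ₂ (c x))
        rw [hcτ₁, hcτ₂]
      inv_mem' := by
        rintro σ ⟨hr, τ, hτ, hcτ⟩
        refine ⟨fun x => ?_, τ⁻¹, A.inv_mem hτ, fun x => ?_⟩
        · have := hr (σ⁻¹ x)
          rw [Equiv.Perm.coe_inv, Equiv.apply_symm_apply] at this
          exact s.iseqv.symm this
        · have := hcτ (σ⁻¹ x)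
          rw [Equiv.Perm.coe_inv, Equiv.apply_symm_apply] at this
          rw [this]
          exact (Equiv.symm_apply_apply τ _).symm } with hH
  have hmem : ∀ σ : Equiv.Perm β,
      σ ∈ H ↔ (∀ x, s.r (σ x) x) ∧ ∃ τ ∈ A, ∀ x, c (σ x) = τ (c x) := fun _ => Iff.rfl
  -- the homomorphism H →* A
  have hspec : ∀ σ : H, ∀ x, c (σ.val x) = ((hmem σ.val).mp σ.2).2.choose (c x) :=
    fun σ => ((hmem σ.val).mp σ.2).2.choose_spec.2
  set f : H → A := fun σ => ⟨((hmem σ.val).mp σ.2).2.choose,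
    ((hmem σ.val).mp σ.2).2.choose_spec.1⟩ with hf
  have hfspec : ∀ σ : H, ∀ x, c (σ.val x) = (f σ).val (c x) := hspec
  have hfu : ∀ (σ : H) (τ : Equiv.Perm (Fin n)), (∀ x, c (σ.val x) = τ (c x)) →
      (f σ).val = τ := by
    intro σ τ hτ
    exact huniq _ _ fun x => by rw [← hfspec σ x, hτ x]
  set φ : H →* A := MonoidHom.mk' f (by
    intro σ₁ σ₂
    refine Subtype.ext (hfu (σ₁ * σ₂) ((f σ₁).val * (f σ₂).val) fun x => ?_)
    show c (σ₁.val (σ₂.val x)) = (f σ₁).val ((f σ₂).val (c x))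
    rw [hfspec σ₁, hfspec σ₂]) with hφ
  have hφsurj : Function.Surjective φ := by
    rintro ⟨τ, hτ⟩
    obtain ⟨σ, hσr, hσc⟩ := lift_perm s c τ ((hPerm τ).mp (hA hτ))
    refine ⟨⟨σ, (hmem σ).mpr ⟨hσr, τ, hτ, hσc⟩⟩, Subtype.ext (hfu _ _ hσc)⟩
  have hker : Nat.card φ.ker = Nat.card fixπ := by
    have to_fix : ∀ σ : φ.ker, σ.val.val ∈ fixπ := by
      rintro ⟨⟨σ, hσH⟩, hσk⟩
      have h1 : (f ⟨σ, hσH⟩).val = 1 := congrArg Subtype.val hσk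
      refine (hfix σ).mpr ⟨((hmem σ).mp hσH).1, fun x => ?_⟩
      have := hfspec ⟨σ, hσH⟩ x
      rw [h1] at this
      simpa using this
    have to_H : ∀ σ : fixπ, σ.val ∈ H := fun σ =>
      (hmem σ.val).mpr ⟨((hfix σ.val).mp σ.2).1, 1, A.one_mem,
        fun x => by simpa using ((hfix σ.val).mp σ.2).2 x⟩
    have to_ker : ∀ σ : fixπ, (⟨σ.val, to_H σ⟩ : H) ∈ φ.ker := by
      intro σ
      refine MonoidHom.mem_ker.mpr (Subtype.ext ?_)
      exact hfu ⟨σ.val, to_H σ⟩ 1 fun x => by simpa using ((hfix σ.val).mp σ.2).2 x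
    exact Nat.card_congr ⟨fun σ => ⟨σ.val.val, to_fix σ⟩,
      fun σ => ⟨⟨σ.val, to_H σ⟩, to_ker σ⟩, fun σ => rfl, fun σ => rfl⟩
  have hHP : H ≤ P := fun σ hσ => (hP σ).mpr ((hmem σ).mp hσ).1
  have hcount : Nat.card H = Nat.card fixπ * Nat.card A := by
    rw [Subgroup.card_eq_card_quotient_mul_card_subgroup φ.ker, hker,
      Nat.card_congr (QuotientGroup.quotientKerEquivOfSurjective φ hφsurj).toEquiv,
      Nat.mul_comm]
  rw [← hcount]
  exact Subgroup.card_dvd_of_le hHP
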